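/- Single-path monotone insertion: if T is a path (every node of T has at most one child) and states are computed along T by repeated application of Down starting from {root(P)}, then each node x of P enters the state at most once; that is, for each x there do not exist two nodes y₁ ≠ y₂ on the path with x ∉ X_{parent(y₁)}, x ∈ X_{y₁}, x ∉ X_{parent(y₂)}, x ∈ X_{y₂}. -/
import Mathlib


open Finset
open scoped Classical

/-- A rooted tree on `n` nodes given by a parent function. -/
structure RTree (n : ℕ) where
  parent : Fin n → Fin n
  root : Fin n
  parent_root : parent root = root
  wf : ∀ v, ∃ k, parent^[k] v = root

namespace RTree

variable {n : ℕ}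

/-- `x` is an ancestor of `v` (possibly `x = v`). -/
def Anc (T : RTree n) (x v : Fin n) : Prop := ∃ k, T.parent^[k] v = x

/-- `z` is a child of `y`. -/
def IsChild (T : RTree n) (z y : Fin n) : Prop := T.parent z = y ∧ z ≠ y

/-- The number of nodes in the subtree rooted at `y`. -/
noncomputable def size (T : RTree n) (y : Fin n) : ℕ :=
  (Finset.univ.filter fun v => T.Anc y v).card

/-- A leaf is a node with no children. -/
def IsLeaf (T : RTree n) (v : Fin n) : Prop := ∀ z, T.parent z = v → z = v

noncomputable def leaves (T : RTree n) : Finset (Fin n) :=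
  Finset.univ.filter fun v => T.IsLeaf v

noncomputable def depth (T : RTree n) (v : Fin n) : ℕ := Nat.find (T.wf v)

/-- The list of labels on the path from the root down to `v`. -/
noncomputable def pathLabels {α : Type*} (T : RTree n) (lab : Fin n → α) (v : Fin n) :
    List α :=
  (List.range (T.depth v + 1)).map fun i => lab (T.parent^[T.depth v - i] v)

/-- The number of light edges on the root-to-`y` path (`hv x = true` iff `x` is heavy). -/
noncomputable def lightdepth (T : RTree n) (hv : Fin n → Bool) (y : Fin n) : ℕ :=
  (Finset.univ.filter fun x => T.Anc x y ∧ x ≠ T.root ∧ hv x = false).card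

end RTree

/-- The `Down` procedure: children of matched nodes together with unmatched nodes. -/
def Down {m : ℕ} {α : Type*} (P : RTree m) (lab : Fin m → α) (X : Set (Fin m)) (a : α) :
    Set (Fin m) :=
  {z | ∃ x ∈ X, lab x = a ∧ P.IsChild z x} ∪ {x ∈ X | lab x ≠ a}

namespace RTree

variable {n : ℕ} (T : RTree n)

lemma iterate_root (k : ℕ) : T.parent^[k] T.root = T.root :=
  Function.iterate_fixed T.parent_root k

lemma anc_refl (a : Fin n) : T.Anc a a := ⟨0, rfl⟩

lemma anc_parent (a : Fin n) : T.Anc (T.parent a) a := ⟨1, rfl⟩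

lemma anc_trans {a b c : Fin n} (h1 : T.Anc a b) (h2 : T.Anc b c) : T.Anc a c := by
  obtain ⟨i, hi⟩ := h1; obtain ⟨j, hj⟩ := h2
  exact ⟨i + j, by rw [Function.iterate_add_apply, hj, hi]⟩

lemma cycle_root {u : Fin n} {c : ℕ} (hc : T.parent^[c] u = u) (hc0 : c ≠ 0) :
    u = T.root := by
  obtain ⟨k, hk⟩ := T.wf u
  have hck : ∀ j, T.parent^[c * j] u = u := by
    intro j; induction j with
    | zero => simp
    | succ j ih => rw [Nat.mul_succ, Function.iterate_add_apply, hc, ih]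
  rcases Nat.eq_zero_or_pos k with h0 | hkpos
  · rw [h0] at hk; exact hk
  · have h1 : k ≤ c * k := Nat.le_mul_of_pos_left k (Nat.pos_of_ne_zero hc0)
    have h2 : T.parent^[c * k] u = T.root := by
      calc T.parent^[c*k] u = T.parent^[c*k - k + k] u := by rw [Nat.sub_add_cancel h1]
        _ = T.parent^[c*k-k] (T.parent^[k] u) := Function.iterate_add_apply _ _ _ _
        _ = T.root := by rw [hk, T.iterate_root]
    rw [hck k] at h2; exact h2

lemma anc_antisymm {a b : Fin n} (h1 : T.Anc a b) (h2 : T.Anc b a) : a = b := by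
  obtain ⟨i, hi⟩ := h1; obtain ⟨j, hj⟩ := h2
  rcases Nat.eq_zero_or_pos i with h0 | hpos
  · rw [h0] at hi; exact hi.symm
  · have hc : T.parent^[j + i] b = b := by
      rw [Function.iterate_add_apply, hi, hj]
    have hb : b = T.root := T.cycle_root hc (by omega)
    subst hb
    rw [T.iterate_root] at hi; exact hi.symm

lemma anc_comparable {a b c : Fin n} (h1 : T.Anc a c) (h2 : T.Anc b c) :
    T.Anc a b ∨ T.Anc b a := by
  obtain ⟨i, hi⟩ := h1; obtain ⟨j, hj⟩ := h2
  rcases le_total i j with h | h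
  · right
    refine ⟨j - i, ?_⟩
    rw [← hi, ← Function.iterate_add_apply, Nat.sub_add_cancel h, hj]
  · left
    refine ⟨i - j, ?_⟩
    rw [← hj, ← Function.iterate_add_apply, Nat.sub_add_cancel h, hi]

lemma depth_spec (v : Fin n) : T.parent^[T.depth v] v = T.root := Nat.find_spec (T.wf v)

lemma depth_le {v : Fin n} {k : ℕ} (h : T.parent^[k] v = T.root) : T.depth v ≤ k :=
  Nat.find_le h

lemma depth_root : T.depth T.root = 0 :=
  Nat.le_zero.mp (T.depth_le (by simp))

lemma eq_root_of_depth_zero {v : Fin n} (h : T.depth v = 0) : v = T.root := by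
  have := T.depth_spec v; rwa [h] at this

lemma parent_ne_self {v : Fin n} (h : v ≠ T.root) : T.parent v ≠ v := by
  intro hp
  exact h (by have := T.depth_spec v; rwa [Function.iterate_fixed hp] at this)

lemma depth_pos {v : Fin n} (h : v ≠ T.root) : 0 < T.depth v :=
  Nat.pos_of_ne_zero fun h0 => h (T.eq_root_of_depth_zero h0)

lemma depth_parent {v : Fin n} (h : v ≠ T.root) :
    T.depth (T.parent v) = T.depth v - 1 := by
  have hd := T.depth_spec v
  have h1 : 1 ≤ T.depth v := T.depth_pos h
  apply le_antisymm
  · apply T.depth_le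
    have h2 : T.parent^[T.depth v - 1] (T.parent v) = T.parent^[T.depth v] v := by
      rw [← Function.iterate_succ_apply, Nat.succ_eq_add_one, Nat.sub_add_cancel h1]
    rw [h2, hd]
  · have h3 : T.parent^[T.depth (T.parent v) + 1] v = T.root := by
      rw [Function.iterate_succ_apply]; exact T.depth_spec (T.parent v)
    have := T.depth_le h3
    omega

lemma depth_parent_lt {v : Fin n} (h : v ≠ T.root) :
    T.depth (T.parent v) < T.depth v := by
  rw [T.depth_parent h]; have := T.depth_pos h; omega

lemma anc_root_eq {w : Fin n} (h : T.Anc w T.root) : w = T.root := by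
  obtain ⟨k, hk⟩ := h; rw [T.iterate_root] at hk; exact hk.symm

lemma anc_parent_of_ne {w z : Fin n} (h : T.Anc w z) (hne : w ≠ z) :
    T.Anc w (T.parent z) := by
  obtain ⟨k, hk⟩ := h
  cases k with
  | zero => exact absurd hk.symm hne
  | succ j => exact ⟨j, by rw [← Function.iterate_succ_apply]; exact hk⟩

lemma anc_of_anc_parent {w z : Fin n} (h : T.Anc w (T.parent z)) : T.Anc w z :=
  T.anc_trans h (T.anc_parent z)

lemma depth_iterate {z : Fin n} : ∀ k, k ≤ T.depth z →
    T.depth (T.parent^[k] z) = T.depth z - k := by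
  intro k; induction k with
  | zero => simp
  | succ k ih =>
    intro hk
    have h1 : T.parent^[k] z ≠ T.root := by
      intro h; have := T.depth_le h; omega
    rw [Function.iterate_succ_apply', T.depth_parent h1, ih (by omega)]
    omega

section Path

lemma depth_inj (hpath : ∀ y z1 z2, T.IsChild z1 y → T.IsChild z2 y → z1 = z2) : ∀ d (y z : Fin n), T.depth y = d → T.depth z = d → y = z := by
  intro d
  induction d using Nat.strong_induction_on with
  | _ d ih =>
    intro y z hy hz
    rcases Nat.eq_zero_or_pos d with h0 | hpos
    · subst h0
      rw [T.eq_root_of_depth_zero hy, T.eq_root_of_depth_zero hz]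
    · have hyr : y ≠ T.root := fun h => by rw [h, T.depth_root] at hy; omega
      have hzr : z ≠ T.root := fun h => by rw [h, T.depth_root] at hz; omega
      have hp : T.parent y = T.parent z :=
        ih (d - 1) (by omega) _ _ (by rw [T.depth_parent hyr, hy]) (by rw [T.depth_parent hzr, hz])
      exact hpath (T.parent y) y z ⟨rfl, Ne.symm (T.parent_ne_self hyr)⟩
        ⟨hp.symm, by rw [hp]; exact Ne.symm (T.parent_ne_self hzr)⟩

lemma anc_of_depth_le (hpath : ∀ y z1 z2, T.IsChild z1 y → T.IsChild z2 y → z1 = z2)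
    {y z : Fin n} (h : T.depth y ≤ T.depth z) : T.Anc y z := by
  refine ⟨T.depth z - T.depth y, ?_⟩
  have h1 : T.depth (T.parent^[T.depth z - T.depth y] z) = T.depth y := by
    rw [T.depth_iterate _ (by omega)]; omega
  exact T.depth_inj hpath (T.depth y) _ _ h1 rfl

end Path

end RTree

section Machine

variable {m n : ℕ} {α : Type*} (P : RTree m) (T : RTree n)
  (lp : Fin m → α) (lt : Fin n → α) (X : Fin n → Set (Fin m))

lemma mem_down_iff {S : Set (Fin m)} {a : α} {x : Fin m} :
    x ∈ Down P lp S a ↔ (∃ q ∈ S, lp q = a ∧ P.IsChild x q) ∨ (x ∈ S ∧ lp x ≠ a) := by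
  simp [Down, Set.mem_union, Set.mem_setOf_eq]

def IsAC (S : Set (Fin m)) : Prop := ∀ a ∈ S, ∀ b ∈ S, P.Anc a b → a = b

lemma down_AC {S : Set (Fin m)} {a : α} (hS : IsAC P S) : IsAC P (Down P lp S a) := by
  intro u hu v hv huv
  rw [mem_down_iff] at hu hv
  have ancchild : ∀ c q : Fin m, P.IsChild c q → P.Anc q c := fun c q h => ⟨1, h.1⟩
  rcases hu with ⟨q, hqS, hql, hq⟩ | ⟨huS, hul⟩ <;>
    rcases hv with ⟨r, hrS, hrl, hr⟩ | ⟨hvS, hvl⟩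
  · -- both children of matched nodes
    have hqv : P.Anc q v := P.anc_trans (ancchild u q hq) huv
    have hrv : P.Anc r v := ancchild v r hr
    have hqr : q = r := by
      rcases P.anc_comparable hqv hrv with h | h
      · exact hS q hqS r hrS h
      · exact (hS r hrS q hqS h).symm
    subst hqr
    obtain ⟨k, hk⟩ := huv
    cases k with
    | zero => exact hk.symm
    | succ j =>
      exfalso
      have huq : P.Anc u q := ⟨j, by rw [← hr.1, ← Function.iterate_succ_apply]; exact hk⟩
      exact hq.2 (P.anc_antisymm huq (ancchild u q hq))
  · exfalso
    have hqv : P.Anc q v := P.anc_trans (ancchild u q hq) huv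
    have := hS q hqS v hvS hqv
    rw [this] at hql; exact hvl hql
  · exfalso
    have hrv : P.Anc r v := ancchild v r hr
    have hur : u = r := by
      rcases P.anc_comparable huv hrv with h | h
      · exact hS u huS r hrS h
      · exact (hS r hrS u huS h).symm
    rw [hur] at hul; exact hul hrl
  · exact hS u huS v hvS huv

/-- The previous state. -/
def prevState (y : Fin n) : Set (Fin m) :=
  if y = T.root then ({P.root} : Set (Fin m)) else X (T.parent y)

def Entry (x : Fin m) (y : Fin n) : Prop := x ∈ X y ∧ x ∉ prevState P T X y

variable (hroot : X T.root = Down P lp {P.root} (lt T.root))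
  (hstep : ∀ z, z ≠ T.root → X z = Down P lp (X (T.parent z)) (lt z))

include hroot hstep

lemma hX : ∀ y, X y = Down P lp (prevState P T X y) (lt y) := by
  intro y
  unfold prevState
  split
  · next h => rw [h]; exact hroot
  · next h => exact hstep y h

lemma X_AC : ∀ d (y : Fin n), T.depth y = d → IsAC P (X y) := by
  intro d
  induction d using Nat.strong_induction_on with
  | _ d ih =>
    intro y hy
    rw [hX P T lp lt X hroot hstep y]
    apply down_AC
    unfold prevState
    split
    · intro a ha b hb _
      rw [Set.mem_singleton_iff] at ha hb; rw [ha, hb]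
    · next h =>
      exact ih (T.depth (T.parent y)) (by have := T.depth_parent_lt h; omega) _ rfl

lemma prev_AC (y : Fin n) : IsAC P (prevState P T X y) := by
  unfold prevState
  split
  · intro a ha b hb _
    rw [Set.mem_singleton_iff] at ha hb; rw [ha, hb]
  · exact X_AC P T lp lt X hroot hstep (T.depth (T.parent y)) _ rfl

lemma entry_struct {x : Fin m} {y : Fin n} (he : Entry P T X x y) :
    P.parent x ∈ prevState P T X y ∧ lp (P.parent x) = lt y ∧ x ≠ P.parent x := by
  obtain ⟨hin, hout⟩ := he
  rw [hX P T lp lt X hroot hstep y, mem_down_iff] at hin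
  rcases hin with ⟨q, hqS, hql, hq⟩ | ⟨hS, _⟩
  · rw [hq.1]; exact ⟨hqS, hql, hq.2⟩
  · exact absurd hS hout

lemma entry_root_false {y : Fin n} (he : Entry P T X P.root y) : False := by
  obtain ⟨_, _, h⟩ := entry_struct P T lp lt X hroot hstep he
  exact h (P.parent_root).symm

omit hroot hstep in
lemma mem_X_cases {x : Fin m} {y : Fin n} (h : x ∈ X y) :
    Entry P T X x y ∨ x ∈ prevState P T X y := by
  by_cases hp : x ∈ prevState P T X y
  · exact Or.inr hp
  · exact Or.inl ⟨h, hp⟩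

lemma parent_not_mem {x : Fin m} {y : Fin n} (he : Entry P T X x y) :
    P.parent x ∉ X y := by
  obtain ⟨hprev, hlab, _⟩ := entry_struct P T lp lt X hroot hstep he
  intro hmem
  rw [hX P T lp lt X hroot hstep y, mem_down_iff] at hmem
  rcases hmem with ⟨q, hqS, _, hq⟩ | ⟨_, hul⟩
  · have : P.Anc q (P.parent x) := ⟨1, hq.1⟩
    exact hq.2 ((prev_AC P T lp lt X hroot hstep y) q hqS _ hprev this).symm
  · exact hul hlab

lemma root_persists : ∀ d (z : Fin n), T.depth z = d → P.root ∈ X z →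
    ∀ w, T.Anc w z → P.root ∈ X w := by
  intro d
  induction d using Nat.strong_induction_on with
  | _ d ih =>
    intro z hz hmem w hw
    rcases mem_X_cases P T X hmem with he | hprev
    · exact absurd he (entry_root_false P T lp lt X hroot hstep)
    · by_cases hzr : z = T.root
      · subst hzr
        rw [T.anc_root_eq hw]; exact hmem
      · rw [prevState, if_neg hzr] at hprev
        by_cases hwz : w = z
        · subst hwz; exact hmem
        · exact ih (T.depth (T.parent z)) (by have := T.depth_parent_lt hzr; omega)
            _ rfl hprev w (T.anc_parent_of_ne hw hwz)

omit hroot hstep in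
lemma entry_exists : ∀ d (z : Fin n), T.depth z = d → ∀ p, p ≠ P.root → p ∈ X z →
    ∃ y', T.Anc y' z ∧ Entry P T X p y' ∧
      ∀ w, T.Anc y' w → T.Anc w z → p ∈ X w := by
  intro d
  induction d using Nat.strong_induction_on with
  | _ d ih =>
    intro z hz p hpr hmem
    rcases mem_X_cases P T X hmem with he | hprev
    · refine ⟨z, T.anc_refl z, he, fun w h1 h2 => ?_⟩
      rw [T.anc_antisymm h2 h1]
      exact hmem
    · by_cases hzr : z = T.root
      · exfalso
        rw [prevState, if_pos hzr, Set.mem_singleton_iff] at hprev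
        exact hpr hprev
      · rw [prevState, if_neg hzr] at hprev
        obtain ⟨y', ha', he', hint⟩ :=
          ih (T.depth (T.parent z)) (by have := T.depth_parent_lt hzr; omega)
            _ rfl p hpr hprev
        refine ⟨y', T.anc_of_anc_parent ha', he', fun w h1 h2 => ?_⟩
        by_cases hwz : w = z
        · subst hwz; exact hmem
        · exact hint w h1 (T.anc_parent_of_ne h2 hwz)

variable (hpath : ∀ y z1 z2, T.IsChild z1 y → T.IsChild z2 y → z1 = z2)

include hpath

lemma once_aux : ∀ d (x : Fin m), P.depth x = d → ∀ y1 y2,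
    Entry P T X x y1 → Entry P T X x y2 → T.depth y1 < T.depth y2 → False := by
  intro d
  induction d using Nat.strong_induction_on with
  | _ d ih =>
    intro x hx y1 y2 e1 e2 hlt
    obtain ⟨hp1, hl1, hne1⟩ := entry_struct P T lp lt X hroot hstep e1
    obtain ⟨hp2, hl2, hne2⟩ := entry_struct P T lp lt X hroot hstep e2
    set p := P.parent x with hpdef
    have hxr : x ≠ P.root := by
      intro h; subst h
      exact entry_root_false P T lp lt X hroot hstep e1
    have hdp : P.depth p < P.depth x := P.depth_parent_lt hxr
    have hy2r : y2 ≠ T.root := by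
      intro h; rw [h, T.depth_root] at hlt; omega
    have hprev2 : p ∈ X (T.parent y2) := by rwa [prevState, if_neg hy2r] at hp2
    have hanc12 : T.Anc y1 (T.parent y2) := by
      apply T.anc_of_depth_le hpath
      rw [T.depth_parent hy2r]; omega
    have hpnX : p ∉ X y1 := parent_not_mem P T lp lt X hroot hstep e1
    by_cases hpr : p = P.root
    · rw [hpr] at hprev2 hpnX
      exact hpnX (root_persists P T lp lt X hroot hstep (T.depth (T.parent y2)) _ rfl
        hprev2 y1 hanc12)
    · obtain ⟨y', ha', he', hint⟩ := entry_exists P T X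
        (T.depth (T.parent y2)) _ rfl p hpr hprev2
      by_cases h1r : y1 = T.root
      · rw [prevState, if_pos h1r, Set.mem_singleton_iff] at hp1
        exact hpr hp1
      · rw [prevState, if_neg h1r] at hp1
        obtain ⟨y'', ha'', he'', _⟩ := entry_exists P T X
          (T.depth (T.parent y1)) _ rfl p hpr hp1
        have heq : y' = y'' := by
          by_contra hne
          have hd : T.depth y' ≠ T.depth y'' := by
            intro h; exact hne (T.depth_inj hpath (T.depth y'') _ _ h rfl)
          rcases Nat.lt_or_ge (T.depth y') (T.depth y'') with h | h
          · exact ih (P.depth p) (by omega) p rfl y' y'' he' he'' h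
          · exact ih (P.depth p) (by omega) p rfl y'' y' he'' he' (by omega)
        rw [← heq] at ha''
        exact hpnX (hint y1 (T.anc_of_anc_parent ha'') hanc12)

end Machine

/-- Single-path monotone insertion (Lemma 6): if `T` is a path then every node `x` of `P`
enters the state at most once, i.e. there are no two distinct nodes of `T` at which `x`
is in the state but not in the previous state. -/
theorem single_path_insert_once (m n : ℕ) {α : Type*} (P : RTree m) (T : RTree n)
    (lp : Fin m → α) (lt : Fin n → α) (X : Fin n → Set (Fin m))
    (hpath : ∀ y z1 z2, T.IsChild z1 y → T.IsChild z2 y → z1 = z2)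
    (hroot : X T.root = Down P lp {P.root} (lt T.root))
    (hstep : ∀ z, z ≠ T.root → X z = Down P lp (X (T.parent z)) (lt z))
    (x : Fin m) (y1 y2 : Fin n)
    (h1 : x ∈ X y1 ∧
      x ∉ (if y1 = T.root then ({P.root} : Set (Fin m)) else X (T.parent y1)))
    (h2 : x ∈ X y2 ∧
      x ∉ (if y2 = T.root then ({P.root} : Set (Fin m)) else X (T.parent y2))) :
    y1 = y2 := by
  have e1 : Entry P T X x y1 := h1
  have e2 : Entry P T X x y2 := h2
  by_contra hne
  have hd : T.depth y1 ≠ T.depth y2 := by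
    intro h; exact hne (T.depth_inj hpath (T.depth y2) _ _ h rfl)
  rcases Nat.lt_or_ge (T.depth y1) (T.depth y2) with h | h
  · exact once_aux P T lp lt X hroot hstep hpath (P.depth x) x rfl y1 y2 e1 e2 h
  · exact once_aux P T lp lt X hroot hstep hpath (P.depth x) x rfl y2 y1 e2 e1 (by omega)
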